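/- For every left-order < on the additive group ℤ² there exists a nonzero ℝ-linear functional φ : ℝ² → ℝ such that every x ∈ ℤ² with φ(x) > 0 satisfies 0 < x and every x ∈ ℤ² with φ(x) < 0 satisfies x < 0. Moreover the line ker φ ⊂ ℝ² is uniquely determined by the order: if φ' is another nonzero linear functional with this property, then ker φ' = ker φ. -/

import Mathlib

set_option maxHeartbeats 1000000

lemma repAux (f : ℝ × ℝ →ₗ[ℝ] ℝ) (x y : ℝ) :
    f (x, y) = f (1, 0) * x + f (0, 1) * y := by
  have h : (x, y) = x • ((1:ℝ), (0:ℝ)) + y • ((0:ℝ), (1:ℝ)) := by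
    simp [Prod.ext_iff]
  rw [h, map_add, map_smul, map_smul, smul_eq_mul, smul_eq_mul]; ring

lemma nzAux (f : ℝ × ℝ →ₗ[ℝ] ℝ) (hf : f ≠ 0) : f (1,0) ≠ 0 ∨ f (0,1) ≠ 0 := by
  by_contra h
  push_neg at h
  apply hf
  apply LinearMap.ext
  intro w
  have := repAux f w.1 w.2
  simp only [Prod.mk.eta] at this
  simp [this, h.1, h.2]

lemma kerAux (r : ℤ × ℤ → ℤ × ℤ → Prop)
    (hord : IsStrictTotalOrder (ℤ × ℤ) r)
    (φ φ' : ℝ × ℝ →ₗ[ℝ] ℝ) (hφ : φ ≠ 0) (hφ' : φ' ≠ 0)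
    (hpos : ∀ x : ℤ × ℤ, 0 < φ ((x.1 : ℝ), (x.2 : ℝ)) → r 0 x)
    (hneg' : ∀ x : ℤ × ℤ, φ' ((x.1 : ℝ), (x.2 : ℝ)) < 0 → r x 0) :
    LinearMap.ker φ' = LinearMap.ker φ := by
  haveI := hord
  set a := φ (1,0) with ha
  set b := φ (0,1) with hb
  set a' := φ' (1,0) with ha'
  set b' := φ' (0,1) with hb'
  -- the determinant vanishes
  have hdet : a * b' - a' * b = 0 := by
    by_contra hD
    set D := a * b' - a' * b with hDdef
    set v1 : ℝ := (b' + b) / D with hv1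
    set v2 : ℝ := (-a' - a) / D with hv2
    have hval : φ (v1, v2) = 1 := by
      rw [repAux, ← ha, ← hb, hv1, hv2]
      field_simp
      ring
    have hval' : φ' (v1, v2) = -1 := by
      rw [repAux, ← ha', ← hb', hv1, hv2]
      field_simp
      ring
    set K : ℝ := |a| + |b| + |a'| + |b'| + 1 with hK
    have hKpos : 0 < K := by positivity
    have hδ : (0:ℝ) < 1 / (2*K) := by positivity
    obtain ⟨q1, hq1a, hq1b⟩ := exists_rat_btwn (show v1 < v1 + 1/(2*K) by linarith)
    obtain ⟨q2, hq2a, hq2b⟩ := exists_rat_btwn (show v2 < v2 + 1/(2*K) by linarith)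
    have key1 : ∀ t d : ℝ, 0 ≤ d → d ≤ 1/(2*K) → -(|t| * (1/(2*K))) ≤ t * d := by
      intro t d hd hdd
      nlinarith [abs_nonneg t, neg_abs_le t, le_abs_self t]
    have key2 : ∀ t d : ℝ, 0 ≤ d → d ≤ 1/(2*K) → t * d ≤ |t| * (1/(2*K)) := by
      intro t d hd hdd
      nlinarith [abs_nonneg t, neg_abs_le t, le_abs_self t]
    have hbound : (|a| + |b| + |a'| + |b'|) * (1/(2*K)) ≤ 1/2 := by
      have hs : |a| + |b| + |a'| + |b'| ≤ K := by rw [hK]; linarith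
      have hKh : K * (1/(2*K)) = 1/2 := by field_simp
      calc (|a| + |b| + |a'| + |b'|) * (1/(2*K)) ≤ K * (1/(2*K)) :=
            mul_le_mul_of_nonneg_right hs hδ.le
        _ = 1/2 := hKh
    have habs : |a| * (1/(2*K)) + |b| * (1/(2*K)) + |a'| * (1/(2*K)) + |b'| * (1/(2*K)) ≤ 1/2 := by
      nlinarith
    have e1 : φ ((q1:ℝ), (q2:ℝ)) = 1 + a * ((q1:ℝ) - v1) + b * ((q2:ℝ) - v2) := by
      rw [repAux, ← ha, ← hb]
      have := hval
      rw [repAux, ← ha, ← hb] at this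
      linarith [this]
    have e2 : φ' ((q1:ℝ), (q2:ℝ)) = -1 + a' * ((q1:ℝ) - v1) + b' * ((q2:ℝ) - v2) := by
      rw [repAux, ← ha', ← hb']
      have := hval'
      rw [repAux, ← ha', ← hb'] at this
      linarith [this]
    have hd1 : (0:ℝ) ≤ (q1:ℝ) - v1 := by linarith
    have hd1' : (q1:ℝ) - v1 ≤ 1/(2*K) := by linarith
    have hd2 : (0:ℝ) ≤ (q2:ℝ) - v2 := by linarith
    have hd2' : (q2:ℝ) - v2 ≤ 1/(2*K) := by linarith
    have hφq : 0 < φ ((q1:ℝ), (q2:ℝ)) := by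
      have h1 := key1 a _ hd1 hd1'
      have h2 := key1 b _ hd2 hd2'
      rw [e1]; nlinarith [abs_nonneg a', abs_nonneg b']
    have hφ'q : φ' ((q1:ℝ), (q2:ℝ)) < 0 := by
      have h1 := key2 a' _ hd1 hd1'
      have h2 := key2 b' _ hd2 hd2'
      rw [e2]; nlinarith [abs_nonneg a, abs_nonneg b]
    -- scale to a lattice point
    set N1 : ℤ := q1.num * q2.den with hN1
    set N2 : ℤ := q2.num * q1.den with hN2
    set d : ℝ := (q1.den : ℝ) * (q2.den : ℝ) with hd
    have hdpos : 0 < d := by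
      have h1 : 0 < q1.den := q1.den_pos
      have h2 : 0 < q2.den := q2.den_pos
      have h1' : (0:ℝ) < (q1.den:ℝ) := by exact_mod_cast h1
      have h2' : (0:ℝ) < (q2.den:ℝ) := by exact_mod_cast h2
      positivity
    have hc1 : ((N1:ℝ)) = d * (q1:ℝ) := by
      rw [hN1, hd, Rat.cast_def]
      push_cast
      field_simp
    have hc2 : ((N2:ℝ)) = d * (q2:ℝ) := by
      rw [hN2, hd, Rat.cast_def]
      push_cast
      field_simp
    have hφN : φ ((N1:ℝ), (N2:ℝ)) = d * φ ((q1:ℝ), (q2:ℝ)) := by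
      rw [repAux, repAux φ ((q1:ℝ)) ((q2:ℝ)), ← ha, ← hb, hc1, hc2]; ring
    have hφ'N : φ' ((N1:ℝ), (N2:ℝ)) = d * φ' ((q1:ℝ), (q2:ℝ)) := by
      rw [repAux, repAux φ' ((q1:ℝ)) ((q2:ℝ)), ← ha', ← hb', hc1, hc2]; ring
    have h1 : r 0 (N1, N2) := hpos (N1, N2) (by rw [hφN]; positivity)
    have h2 : r (N1, N2) 0 := hneg' (N1, N2) (by rw [hφ'N]; exact mul_neg_of_pos_of_neg hdpos hφ'q)
    exact irrefl_of r 0 (trans_of r h1 h2)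
  -- from the vanishing determinant, the kernels agree
  have hab := nzAux φ hφ
  have hab' := nzAux φ' hφ'
  rw [← ha, ← hb] at hab
  rw [← ha', ← hb'] at hab'
  have hzero : ∀ f : ℝ × ℝ →ₗ[ℝ] ℝ, f (1,0) = 0 → f (0,1) = 0 → f = 0 := by
    intro f h1 h2
    apply LinearMap.ext
    intro w
    have := repAux f w.1 w.2
    simp only [Prod.mk.eta] at this
    simp [this, h1, h2]
  obtain ⟨c, hc0, hcφ⟩ : ∃ c : ℝ, c ≠ 0 ∧ φ' = c • φ := by
    rcases eq_or_ne a 0 with haz | haz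
    · have hbz : b ≠ 0 := by
        rcases hab with h | h
        · exact absurd haz h
        · exact h
      have ha'z : a' = 0 := by
        have : a' * b = 0 := by rw [haz] at hdet; linarith
        rcases mul_eq_zero.mp this with h | h
        · exact h
        · exact absurd h hbz
      have hb'z : b' ≠ 0 := by
        rcases hab' with h | h
        · exact absurd ha'z h
        · exact h
      refine ⟨b'/b, div_ne_zero hb'z hbz, ?_⟩
      apply LinearMap.ext
      intro w
      have h1 := repAux φ w.1 w.2
      have h2 := repAux φ' w.1 w.2
      simp only [Prod.mk.eta] at h1 h2
      rw [LinearMap.smul_apply, smul_eq_mul, h1, h2, ← ha, ← hb, ← ha', ← hb', haz, ha'z]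
      field_simp
      ring
    · have ha'z : a' ≠ 0 := by
        intro h
        have : a * b' = 0 := by rw [h] at hdet; linarith
        rcases mul_eq_zero.mp this with h2 | h2
        · exact haz h2
        · exact hφ' (hzero φ' (by rw [← ha']; exact h) (by rw [← hb']; exact h2))
      refine ⟨a'/a, div_ne_zero ha'z haz, ?_⟩
      apply LinearMap.ext
      intro w
      have h1 := repAux φ w.1 w.2
      have h2 := repAux φ' w.1 w.2
      simp only [Prod.mk.eta] at h1 h2
      rw [LinearMap.smul_apply, smul_eq_mul, h1, h2, ← ha, ← hb, ← ha', ← hb']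
      have hb'eq : b' = a' * b / a := by
        field_simp
        linarith
      rw [hb'eq]
      field_simp
  rw [hcφ]
  exact LinearMap.ker_smul φ c hc0

lemma orderAux (r : ℤ × ℤ → ℤ × ℤ → Prop)
    (hord : IsStrictTotalOrder (ℤ × ℤ) r)
    (hinv : ∀ g a b : ℤ × ℤ, r a b → r (g + a) (g + b))
    (he2 : r 0 ((0:ℤ), (1:ℤ))) :
    ∃ φ : ℝ × ℝ →ₗ[ℝ] ℝ, φ ≠ 0 ∧
      (∀ x : ℤ × ℤ, 0 < φ ((x.1 : ℝ), (x.2 : ℝ)) → r 0 x) ∧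
      (∀ x : ℤ × ℤ, φ ((x.1 : ℝ), (x.2 : ℝ)) < 0 → r x 0) := by
  haveI := hord
  set P : ℤ × ℤ → Prop := fun x => r 0 x with hP
  have hadd : ∀ a b, P a → P b → P (a + b) := by
    intro a b ha hb
    have h1 : r a (a + b) := by simpa using hinv a 0 b hb
    exact trans_of r ha h1
  have hneg : ∀ x, r x 0 ↔ P (-x) := by
    intro x
    constructor
    · intro h; simpa using hinv (-x) x 0 h
    · intro h; simpa using hinv x 0 (-x) h
  have h0 : ¬ P 0 := irrefl_of r 0
  have htri : ∀ x : ℤ × ℤ, x ≠ 0 → P x ∨ P (-x) := by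
    intro x hx
    rcases trichotomous_of r 0 x with h | h | h
    · exact Or.inl h
    · exact absurd h.symm hx
    · exact Or.inr ((hneg x).mp h)
  have hasym : ∀ x, P x → P (-x) → False := by
    intro x h1 h2
    have := hadd x (-x) h1 h2
    simp at this
    exact h0 this
  have hsmulN : ∀ (k : ℕ) (x : ℤ × ℤ), P x → P ((k+1) • x) := by
    intro k
    induction k with
    | zero => intro x hx; simpa using hx
    | succ n ih =>
      intro x hx
      have h : (n+1+1) • x = (n+1) • x + x := succ_nsmul x (n+1)
      rw [h]
      exact hadd _ _ (ih x hx) hx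
  have hsmulZ : ∀ (k : ℤ) (x : ℤ × ℤ), 0 < k → P x → P (k • x) := by
    intro k x hk hx
    obtain ⟨n, hn⟩ : ∃ n : ℕ, k = ((n : ℤ) + 1) := ⟨(k-1).toNat, by omega⟩
    have hk' : k = (((n+1 : ℕ) : ℤ)) := by push_cast; omega
    rw [hk', natCast_zsmul]
    exact hsmulN n x hx
  have hsmulrev : ∀ (k : ℤ) (x : ℤ × ℤ), 0 < k → P (k • x) → P x := by
    intro k x hk hkx
    have hx0 : x ≠ 0 := by
      rintro rfl
      rw [smul_zero] at hkx
      exact h0 hkx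
    rcases htri x hx0 with h | h
    · exact h
    · exfalso
      have h2 := hsmulZ k (-x) hk h
      rw [smul_neg] at h2
      exact hasym _ hkx h2
  have he2' : P ((0:ℤ), (1:ℤ)) := he2
  have L : ∀ n m n' m' : ℤ, 0 < n → 0 < n' → P (n, m) → m * n' < m' * n → P (n', m') := by
    intro n m n' m' hn hn' hp hlt
    apply hsmulrev n (n', m') hn
    have hid : n • ((n', m') : ℤ × ℤ)
        = n' • ((n, m) : ℤ × ℤ) + (m' * n - m * n') • (((0:ℤ),(1:ℤ)) : ℤ × ℤ) := by
      simp only [Prod.smul_mk, smul_eq_mul, Prod.mk_add_mk, Prod.mk.injEq]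
      constructor <;> ring
    rw [hid]
    exact hadd _ _ (hsmulZ n' (n,m) hn' hp) (hsmulZ _ ((0:ℤ),(1:ℤ)) (by linarith) he2')
  have hvert : ∀ m : ℤ, 0 < m → P ((0:ℤ), m) := by
    intro m hm
    have := hsmulZ m ((0:ℤ),(1:ℤ)) hm he2'
    simpa using this
  by_cases hA : ∃ n m : ℤ, 0 < n ∧ P (n, m)
  · by_cases hB : ∃ n m : ℤ, 0 < n ∧ ¬ P (n, m)
    · -- main case: an irrational-or-rational cut
      obtain ⟨n₀, m₀, hn₀, hnp₀⟩ := hB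
      set S : Set ℝ := {t | ∃ n m : ℤ, 0 < n ∧ P (n, m) ∧ t = (m : ℝ) / (n : ℝ)} with hS
      have hSne : S.Nonempty := by
        obtain ⟨n, m, hn, hp⟩ := hA
        exact ⟨(m:ℝ)/(n:ℝ), n, m, hn, hp, rfl⟩
      have hlb : ∀ t ∈ S, (m₀:ℝ)/(n₀:ℝ) ≤ t := by
        rintro t ⟨n, m, hn, hp, rfl⟩
        have hnR : (0:ℝ) < (n:ℝ) := by exact_mod_cast hn
        have hn₀R : (0:ℝ) < (n₀:ℝ) := by exact_mod_cast hn₀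
        rw [div_le_div_iff₀ hn₀R hnR]
        by_contra hcon
        push_neg at hcon
        have hZ : m * n₀ < m₀ * n := by exact_mod_cast hcon
        exact hnp₀ (L n m n₀ m₀ hn hn₀ hp hZ)
      have hbdd : BddBelow S := ⟨_, hlb⟩
      set c : ℝ := sInf S with hc
      refine ⟨LinearMap.snd ℝ ℝ ℝ - c • LinearMap.fst ℝ ℝ ℝ, ?_, ?_, ?_⟩
      · intro h
        have := LinearMap.congr_fun h ((0:ℝ), (1:ℝ))
        simp at this
      · rintro ⟨n, m⟩ h
        simp only [LinearMap.sub_apply, LinearMap.smul_apply, LinearMap.snd_apply,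
          LinearMap.fst_apply, smul_eq_mul] at h
        -- h : 0 < m - c * n
        rcases lt_trichotomy n 0 with hn | hn | hn
        · by_contra hnp
          have hx0 : ((n, m) : ℤ × ℤ) ≠ 0 := by
            simp only [ne_eq, Prod.mk_eq_zero, not_and]
            omega
          rcases htri (n, m) hx0 with hp | hp
          · exact hnp hp
          · have hmem : ((-m : ℤ):ℝ)/((-n : ℤ):ℝ) ∈ S := by
              refine ⟨-n, -m, by omega, ?_, rfl⟩
              simpa using hp
            have hle : c ≤ ((-m : ℤ):ℝ)/((-n : ℤ):ℝ) := csInf_le hbdd hmem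
            have hnR : (0:ℝ) < ((-n : ℤ):ℝ) := by exact_mod_cast (by omega : (0:ℤ) < -n)
            rw [le_div_iff₀ hnR] at hle
            push_cast at hle h
            nlinarith
        · subst hn
          have hm : 0 < m := by
            push_cast at h
            simp at h
            exact_mod_cast h
          exact hvert m hm
        · have hnR : (0:ℝ) < (n:ℝ) := by exact_mod_cast hn
          have hlt : c < (m:ℝ)/(n:ℝ) := by
            rw [lt_div_iff₀ hnR]; linarith
          obtain ⟨t, htS, htlt⟩ := exists_lt_of_csInf_lt hSne hlt
          obtain ⟨n', m', hn', hp', rfl⟩ := htS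
          have hn'R : (0:ℝ) < (n':ℝ) := by exact_mod_cast hn'
          rw [div_lt_div_iff₀ hn'R hnR] at htlt
          have hZ : m' * n < m * n' := by exact_mod_cast htlt
          exact L n' m' n m hn' hn hp' hZ
      · rintro ⟨n, m⟩ h
        simp only [LinearMap.sub_apply, LinearMap.smul_apply, LinearMap.snd_apply,
          LinearMap.fst_apply, smul_eq_mul] at h
        -- h : m - c * n < 0
        rw [hneg]
        rcases lt_trichotomy n 0 with hn | hn | hn
        · have hnR : (0:ℝ) < ((-n : ℤ):ℝ) := by exact_mod_cast (by omega : (0:ℤ) < -n)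
          have hlt : c < ((-m : ℤ):ℝ)/((-n : ℤ):ℝ) := by
            rw [lt_div_iff₀ hnR]; push_cast; push_cast at h; nlinarith
          obtain ⟨t, htS, htlt⟩ := exists_lt_of_csInf_lt hSne hlt
          obtain ⟨n', m', hn', hp', rfl⟩ := htS
          have hn'R : (0:ℝ) < (n':ℝ) := by exact_mod_cast hn'
          rw [div_lt_div_iff₀ hn'R hnR] at htlt
          have hZ : m' * (-n) < (-m) * n' := by exact_mod_cast htlt
          have := L n' m' (-n) (-m) hn' (by omega) hp' hZ
          simpa using this
        · subst hn
          have hm : m < 0 := by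
            push_cast at h
            simp at h
            exact_mod_cast h
          have := hvert (-m) (by omega)
          simpa using this
        · have hnR : (0:ℝ) < (n:ℝ) := by exact_mod_cast hn
          have hnp : ¬ P (n, m) := by
            intro hp
            have hmem : ((m:ℝ))/((n:ℝ)) ∈ S := ⟨n, m, hn, hp, rfl⟩
            have hle : c ≤ (m:ℝ)/(n:ℝ) := csInf_le hbdd hmem
            rw [le_div_iff₀ hnR] at hle
            linarith
          have hx0 : ((n, m) : ℤ × ℤ) ≠ 0 := by
            simp only [ne_eq, Prod.mk_eq_zero, not_and]
            omega
          rcases htri (n, m) hx0 with hp | hp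
          · exact absurd hp hnp
          · exact hp
    · -- every lattice point with positive first coordinate is positive
      push_neg at hB
      refine ⟨LinearMap.fst ℝ ℝ ℝ, ?_, ?_, ?_⟩
      · intro h
        have := LinearMap.congr_fun h ((1:ℝ), (0:ℝ))
        simp at this
      · rintro ⟨n, m⟩ h
        simp only [LinearMap.fst_apply] at h
        have hn : 0 < n := by exact_mod_cast h
        exact hB n m hn
      · rintro ⟨n, m⟩ h
        simp only [LinearMap.fst_apply] at h
        have hn : n < 0 := by exact_mod_cast h
        rw [hneg]
        have := hB (-n) (-m) (by omega)
        simpa using this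
  · -- no lattice point with positive first coordinate is positive
    push_neg at hA
    refine ⟨-(LinearMap.fst ℝ ℝ ℝ), ?_, ?_, ?_⟩
    · intro h
      have := LinearMap.congr_fun h ((1:ℝ), (0:ℝ))
      simp at this
    · rintro ⟨n, m⟩ h
      simp only [LinearMap.neg_apply, LinearMap.fst_apply] at h
      have hn : n < 0 := by
        have : (n:ℝ) < 0 := by linarith
        exact_mod_cast this
      have hx0 : ((n, m) : ℤ × ℤ) ≠ 0 := by
        simp only [ne_eq, Prod.mk_eq_zero, not_and]
        omega
      rcases htri (n, m) hx0 with hp | hp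
      · exact hp
      · exfalso
        have := hA (-n) (-m) (by omega)
        simp at hp
        exact this hp
    · rintro ⟨n, m⟩ h
      simp only [LinearMap.neg_apply, LinearMap.fst_apply] at h
      have hn : 0 < n := by
        have : (0:ℝ) < (n:ℝ) := by linarith
        exact_mod_cast this
      rw [hneg]
      have hx0 : ((n, m) : ℤ × ℤ) ≠ 0 := by
        simp only [ne_eq, Prod.mk_eq_zero, not_and]
        omega
      rcases htri (n, m) hx0 with hp | hp
      · exact absurd hp (hA n m hn)
      · exact hp

lemma orderExists (r : ℤ × ℤ → ℤ × ℤ → Prop)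
    (hord : IsStrictTotalOrder (ℤ × ℤ) r)
    (hinv : ∀ g a b : ℤ × ℤ, r a b → r (g + a) (g + b)) :
    ∃ φ : ℝ × ℝ →ₗ[ℝ] ℝ, φ ≠ 0 ∧
      (∀ x : ℤ × ℤ, 0 < φ ((x.1 : ℝ), (x.2 : ℝ)) → r 0 x) ∧
      (∀ x : ℤ × ℤ, φ ((x.1 : ℝ), (x.2 : ℝ)) < 0 → r x 0) := by
  haveI := hord
  rcases trichotomous_of r 0 (((0:ℤ),(1:ℤ)) : ℤ × ℤ) with h | h | h
  · exact orderAux r hord hinv h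
  · exfalso
    have : ((0:ℤ),(1:ℤ)) = ((0 : ℤ × ℤ)) := h.symm
    simp [Prod.ext_iff] at this
  · -- r (0,1) 0, hence the flipped order is normalized
    set σ : ℤ × ℤ → ℤ × ℤ := fun p => (p.1, -p.2) with hσ
    set r' : ℤ × ℤ → ℤ × ℤ → Prop := fun a b => r (σ a) (σ b) with hr'
    have hσσ : ∀ p, σ (σ p) = p := by intro p; simp [hσ]
    have hσadd : ∀ p q, σ (p + q) = σ p + σ q := by
      intro p q; simp [hσ, Prod.ext_iff]; ring
    have hσ0 : σ 0 = 0 := by simp [hσ]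
    haveI htri' : IsTrichotomous (ℤ × ℤ) r' := by
      constructor
      intro a b hab hba
      rcases trichotomous_of r (σ a) (σ b) with hh | hh | hh
      · exact absurd hh hab
      · have := congrArg σ hh
        rwa [hσσ, hσσ] at this
      · exact absurd hh hba
    haveI hirr' : IsIrrefl (ℤ × ℤ) r' := ⟨fun a => irrefl_of r (σ a)⟩
    haveI htrans' : IsTrans (ℤ × ℤ) r' := ⟨fun a b c hab hbc => trans_of r hab hbc⟩
    have hord' : IsStrictTotalOrder (ℤ × ℤ) r' := { }
    have hinv' : ∀ g a b : ℤ × ℤ, r' a b → r' (g + a) (g + b) := by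
      intro g a b hab
      have := hinv (σ g) (σ a) (σ b) hab
      rw [← hσadd, ← hσadd] at this
      exact this
    have he2' : r' 0 ((0:ℤ),(1:ℤ)) := by
      have h2 : r 0 ((0:ℤ),(-1:ℤ)) := by
        have := hinv ((0:ℤ),(-1:ℤ)) ((0:ℤ),(1:ℤ)) 0 h
        simp at this; exact this
      show r (σ 0) (σ ((0:ℤ),(1:ℤ)))
      rw [hσ0]
      simpa [hσ] using h2
    obtain ⟨φ₀, hφ0, hpos0, hneg0⟩ := orderAux r' hord' hinv' he2'
    set σℝ : ℝ × ℝ →ₗ[ℝ] ℝ × ℝ :=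
      LinearMap.prod (LinearMap.fst ℝ ℝ ℝ) (-(LinearMap.snd ℝ ℝ ℝ)) with hσℝ
    have hσℝap : ∀ x y : ℝ, σℝ (x, y) = (x, -y) := by
      intro x y; simp [hσℝ, LinearMap.prod_apply]
    refine ⟨φ₀.comp σℝ, ?_, ?_, ?_⟩
    · intro hz
      apply hφ0
      apply LinearMap.ext
      intro w
      have h1 : σℝ (σℝ w) = w := by
        rcases w with ⟨x, y⟩
        rw [hσℝap, hσℝap]
        simp
      have := LinearMap.congr_fun hz (σℝ w)
      rw [LinearMap.comp_apply, h1] at this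
      simpa using this
    · intro x hx
      rw [LinearMap.comp_apply, hσℝap] at hx
      have hx' : 0 < φ₀ (((σ x).1 : ℝ), ((σ x).2 : ℝ)) := by
        rw [hσ]
        push_cast
        exact hx
      have := hpos0 (σ x) hx'
      have h2 : r (σ 0) (σ (σ x)) := this
      rwa [hσ0, hσσ] at h2
    · intro x hx
      rw [LinearMap.comp_apply, hσℝap] at hx
      have hx' : φ₀ (((σ x).1 : ℝ), ((σ x).2 : ℝ)) < 0 := by
        rw [hσ]
        push_cast
        exact hx
      have := hneg0 (σ x) hx'
      have h2 : r (σ (σ x)) (σ 0) := this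
      rwa [hσ0, hσσ] at h2


/-- For every left-order on the additive group ℤ² there exists a nonzero ℝ-linear
functional φ : ℝ² → ℝ detecting the order on lattice points, and its kernel line is
uniquely determined by the order. -/
theorem stmt_0 (r : ℤ × ℤ → ℤ × ℤ → Prop)
    (hord : IsStrictTotalOrder (ℤ × ℤ) r)
    (hinv : ∀ g a b : ℤ × ℤ, r a b → r (g + a) (g + b)) :
    ∃ φ : ℝ × ℝ →ₗ[ℝ] ℝ, φ ≠ 0 ∧
      (∀ x : ℤ × ℤ, 0 < φ ((x.1 : ℝ), (x.2 : ℝ)) → r 0 x) ∧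
      (∀ x : ℤ × ℤ, φ ((x.1 : ℝ), (x.2 : ℝ)) < 0 → r x 0) ∧
      ∀ φ' : ℝ × ℝ →ₗ[ℝ] ℝ, φ' ≠ 0 →
        (∀ x : ℤ × ℤ, 0 < φ' ((x.1 : ℝ), (x.2 : ℝ)) → r 0 x) →
        (∀ x : ℤ × ℤ, φ' ((x.1 : ℝ), (x.2 : ℝ)) < 0 → r x 0) →
        LinearMap.ker φ' = LinearMap.ker φ := by
  obtain ⟨φ, h1, h2, h3⟩ := orderExists r hord hinv
  exact ⟨φ, h1, h2, h3, fun φ' hφ' hpos' hneg' => kerAux r hord φ φ' h1 hφ' h2 hneg'⟩
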